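/- Let Y be a measurable space in which singletons are measurable, let K be a Markov kernel from Y to Y, let γ ≥ 1, δ ∈ (0,1), and let y₀, y₁, y₂ ∈ Y be three distinct points. Define the probability measures μ_δ := (1−δ)·δ_{y₀} + δ·δ_{y₁} and ν_δ := ((1−δ)/γ)·δ_{y₀} + (1 − (1−δ)/γ)·δ_{y₂}, where δ_y denotes the Dirac measure at y. Then E_γ(μ_δ‖ν_δ) = δ and E_γ(μ_δK‖ν_δK) = δ · E_{γ'}(K(y₁)‖K(y₂)), where γ' := 1 + (γ−1)/δ. Consequently, sup over probability measures μ, ν on Y with 0 < E_γ(μ‖ν) ≤ δ of E_γ(μK‖νK)/E_γ(μ‖ν) is at least sup over y₁ ≠ y₂ of E_{γ'}(K(y₁)‖K(y₂)). -/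

import Mathlib

open MeasureTheory ProbabilityTheory Real
open scoped ENNReal

noncomputable def Egamma {Y : Type*} [MeasurableSpace Y] (γ : ℝ) (P Q : Measure Y) : ℝ :=
  ⨆ A : {A : Set Y // MeasurableSet A}, ((P A.1).toReal - γ * (Q A.1).toReal)

section Aux

variable {Y : Type*} [MeasurableSpace Y]

instance instNonemptyMeasSet : Nonempty {A : Set Y // MeasurableSet A} :=
  ⟨⟨∅, MeasurableSet.empty⟩⟩

lemma egamma_le_of_forall {γ : ℝ} {P Q : Measure Y} {c : ℝ}
    (h : ∀ A : Set Y, MeasurableSet A → (P A).toReal - γ * (Q A).toReal ≤ c) :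
    Egamma γ P Q ≤ c :=
  ciSup_le fun A => h A.1 A.2

lemma egamma_bddAbove {γ : ℝ} (hγ : 0 ≤ γ) (P Q : Measure Y) [IsFiniteMeasure P] :
    BddAbove (Set.range fun A : {A : Set Y // MeasurableSet A} =>
      ((P A.1).toReal - γ * (Q A.1).toReal)) := by
  refine ⟨(P Set.univ).toReal, ?_⟩
  rintro x ⟨A, rfl⟩
  have h1 : (P A.1).toReal ≤ (P Set.univ).toReal :=
    ENNReal.toReal_mono (measure_ne_top _ _) (measure_mono (Set.subset_univ _))
  have h2 : 0 ≤ γ * (Q A.1).toReal := mul_nonneg hγ ENNReal.toReal_nonneg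
  simp only
  linarith

lemma le_egamma {γ : ℝ} (hγ : 0 ≤ γ) {P Q : Measure Y} [IsFiniteMeasure P]
    {A : Set Y} (hA : MeasurableSet A) :
    (P A).toReal - γ * (Q A).toReal ≤ Egamma γ P Q :=
  le_ciSup (egamma_bddAbove hγ P Q) (⟨A, hA⟩ : {A : Set Y // MeasurableSet A})

lemma isProbabilityMeasure_bind (μ : Measure Y) [IsProbabilityMeasure μ]
    (K : Kernel Y Y) [IsMarkovKernel K] : IsProbabilityMeasure (μ.bind K) := by
  constructor
  rw [Measure.bind_apply MeasurableSet.univ K.measurable.aemeasurable]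
  simp

/-- Data processing inequality for the hockey-stick divergence. -/
lemma egamma_bind_le {γ : ℝ} (hγ : 0 ≤ γ) (K : Kernel Y Y) [IsMarkovKernel K]
    (μ ν : Measure Y) [IsProbabilityMeasure μ] [IsProbabilityMeasure ν] :
    Egamma γ (μ.bind K) (ν.bind K) ≤ Egamma γ μ ν := by
  set ξ : ℝ≥0∞ := ENNReal.ofReal γ with hξ
  have hξν : IsFiniteMeasure (ξ • ν) := by
    constructor
    rw [Measure.smul_apply, smul_eq_mul]
    exact ENNReal.mul_lt_top ENNReal.ofReal_lt_top (measure_lt_top _ _)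
  obtain ⟨s, hs, hs1, hs2⟩ := hahn_decomposition (μ := μ) (ν := ξ • ν)
  have key : ∀ A : Set Y, MeasurableSet A →
      ((μ.bind K) A).toReal - γ * ((ν.bind K) A).toReal ≤ (μ s).toReal - γ * (ν s).toReal := by
    intro A hA
    set f : Y → ℝ≥0∞ := fun y => K y A with hf
    have hfm : Measurable f := K.measurable_coe hA
    have hf1 : ∀ y, f y ≤ 1 := fun y => prob_le_one
    set g : Y → ℝ≥0∞ := fun y => 1 - f y with hg
    have hgm : Measurable g := Measurable.const_sub hfm 1
    have hfg : ∀ y, f y + g y = 1 := fun y => by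
      simp only [hg]
      rw [add_tsub_cancel_of_le (hf1 y)]
    -- restrict comparisons
    have hres1 : (ξ • ν).restrict s ≤ μ.restrict s := by
      refine Measure.le_iff.mpr fun t ht => ?_
      rw [Measure.restrict_apply ht, Measure.restrict_apply ht]
      exact hs1 _ (ht.inter hs) Set.inter_subset_right
    have hres2 : μ.restrict sᶜ ≤ (ξ • ν).restrict sᶜ := by
      refine Measure.le_iff.mpr fun t ht => ?_
      rw [Measure.restrict_apply ht, Measure.restrict_apply ht]
      exact hs2 _ (ht.inter hs.compl) Set.inter_subset_right
    -- main ENNReal inequality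
    have hsplitμ : ∫⁻ y, f y ∂μ = ∫⁻ y in s, f y ∂μ + ∫⁻ y in sᶜ, f y ∂μ :=
      (lintegral_add_compl f hs).symm
    have hsplitν : ∫⁻ y, f y ∂(ξ • ν) = ∫⁻ y in s, f y ∂(ξ • ν) + ∫⁻ y in sᶜ, f y ∂(ξ • ν) :=
      (lintegral_add_compl f hs).symm
    have hcompl : ∫⁻ y in sᶜ, f y ∂μ ≤ ∫⁻ y in sᶜ, f y ∂(ξ • ν) :=
      lintegral_mono' hres2 le_rfl
    have hone_μ : ∫⁻ y in s, f y ∂μ + ∫⁻ y in s, g y ∂μ = μ s := by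
      rw [← lintegral_add_left hfm]
      simp only [hfg]
      simp [Measure.restrict_apply, hs]
    have hone_ν : ∫⁻ y in s, f y ∂(ξ • ν) + ∫⁻ y in s, g y ∂(ξ • ν) = (ξ • ν) s := by
      rw [← lintegral_add_left hfm]
      simp only [hfg]
      simp [Measure.restrict_apply, hs]
    have hgle : ∫⁻ y in s, g y ∂(ξ • ν) ≤ ∫⁻ y in s, g y ∂μ :=
      lintegral_mono' hres1 le_rfl
    have hmain : ∫⁻ y, f y ∂μ + (ξ • ν) s ≤ μ s + ∫⁻ y, f y ∂(ξ • ν) := by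
      rw [hsplitμ, hsplitν, ← hone_μ, ← hone_ν]
      calc ∫⁻ y in s, f y ∂μ + ∫⁻ y in sᶜ, f y ∂μ
            + (∫⁻ y in s, f y ∂(ξ • ν) + ∫⁻ y in s, g y ∂(ξ • ν))
          ≤ ∫⁻ y in s, f y ∂μ + ∫⁻ y in sᶜ, f y ∂(ξ • ν)
            + (∫⁻ y in s, f y ∂(ξ • ν) + ∫⁻ y in s, g y ∂μ) := by
            gcongr
        _ = ∫⁻ y in s, f y ∂μ + ∫⁻ y in s, g y ∂μ
            + (∫⁻ y in s, f y ∂(ξ • ν) + ∫⁻ y in sᶜ, f y ∂(ξ • ν)) := by ring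
    -- convert to reals
    have hμA : (μ.bind K) A = ∫⁻ y, f y ∂μ := Measure.bind_apply hA K.measurable.aemeasurable
    have hνA : (ν.bind K) A = ∫⁻ y, f y ∂ν := Measure.bind_apply hA K.measurable.aemeasurable
    have hint_le : ∀ ρ : Measure Y, ∫⁻ y, f y ∂ρ ≤ ρ Set.univ := fun ρ => by
      calc ∫⁻ y, f y ∂ρ ≤ ∫⁻ _, 1 ∂ρ := lintegral_mono hf1
        _ = ρ Set.univ := by simp
    have hμf : ∫⁻ y, f y ∂μ ≠ ⊤ :=
      ((hint_le μ).trans_lt (measure_lt_top _ _)).ne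
    have hνf : ∫⁻ y, f y ∂ν ≠ ⊤ :=
      ((hint_le ν).trans_lt (measure_lt_top _ _)).ne
    have hsmul : ∫⁻ y, f y ∂(ξ • ν) = ξ * ∫⁻ y, f y ∂ν := lintegral_smul_measure ξ f
    have hξs : (ξ • ν) s = ξ * ν s := by rw [Measure.smul_apply, smul_eq_mul]
    rw [hsmul, hξs] at hmain
    have hr := ENNReal.toReal_le_toReal (a := ∫⁻ y, f y ∂μ + ξ * ν s)
      (b := μ s + ξ * ∫⁻ y, f y ∂ν) ?_ ?_ |>.mpr hmain
    · rw [ENNReal.toReal_add hμf (ENNReal.mul_ne_top ENNReal.ofReal_ne_top (measure_ne_top _ _)),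
        ENNReal.toReal_add (measure_ne_top _ _) (ENNReal.mul_ne_top ENNReal.ofReal_ne_top hνf),
        ENNReal.toReal_mul, ENNReal.toReal_mul, ENNReal.toReal_ofReal hγ] at hr
      rw [hμA, hνA]
      linarith
    · exact ENNReal.add_ne_top.mpr
        ⟨hμf, ENNReal.mul_ne_top ENNReal.ofReal_ne_top (measure_ne_top _ _)⟩
    · exact ENNReal.add_ne_top.mpr
        ⟨measure_ne_top _ _, ENNReal.mul_ne_top ENNReal.ofReal_ne_top hνf⟩
  refine egamma_le_of_forall fun A hA => (key A hA).trans ?_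
  exact le_egamma hγ hs

end Aux

section Construction

variable {Y : Type*} [MeasurableSpace Y] [MeasurableSingletonClass Y]

lemma toReal_comb {a b : ℝ} (ha : 0 ≤ a) (hb : 0 ≤ b) (y z : Y) (A : Set Y) :
    (((ENNReal.ofReal a) • Measure.dirac y + (ENNReal.ofReal b) • Measure.dirac z) A).toReal
      = a * (A.indicator (fun _ => (1:ℝ)) y) + b * (A.indicator (fun _ => (1:ℝ)) z) := by
  by_cases hy : y ∈ A <;> by_cases hz : z ∈ A <;>
    simp [Measure.dirac_apply, Set.indicator_of_mem, Set.indicator_of_notMem, hy, hz,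
      ENNReal.toReal_add ENNReal.ofReal_ne_top ENNReal.ofReal_ne_top,
      ENNReal.toReal_ofReal ha, ENNReal.toReal_ofReal hb]

lemma isProb_comb {a b : ℝ} (ha : 0 ≤ a) (hb : 0 ≤ b) (hab : a + b = 1) (y z : Y) :
    IsProbabilityMeasure
      ((ENNReal.ofReal a) • Measure.dirac y + (ENNReal.ofReal b) • Measure.dirac z) := by
  constructor
  simp [Measure.smul_apply, smul_eq_mul, ← ENNReal.ofReal_add ha hb, hab]

lemma bind_comb (K : Kernel Y Y) [IsMarkovKernel K] (a b : ℝ≥0∞) (y z : Y) {A : Set Y}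
    (hA : MeasurableSet A) :
    ((a • Measure.dirac y + b • Measure.dirac z).bind K) A = a * K y A + b * K z A := by
  rw [Measure.bind_apply hA K.measurable.aemeasurable, lintegral_add_measure, lintegral_smul_measure,
    lintegral_smul_measure, lintegral_dirac' _ (K.measurable_coe hA),
    lintegral_dirac' _ (K.measurable_coe hA), smul_eq_mul, smul_eq_mul]

lemma toReal_bind_comb {a b : ℝ} (ha : 0 ≤ a) (hb : 0 ≤ b) (K : Kernel Y Y) [IsMarkovKernel K]
    (y z : Y) {A : Set Y} (hA : MeasurableSet A) :
    ((((ENNReal.ofReal a) • Measure.dirac y + (ENNReal.ofReal b) • Measure.dirac z).bind K)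
        A).toReal = a * (K y A).toReal + b * (K z A).toReal := by
  rw [bind_comb K _ _ y z hA,
    ENNReal.toReal_add (ENNReal.mul_ne_top ENNReal.ofReal_ne_top (measure_ne_top _ _))
      (ENNReal.mul_ne_top ENNReal.ofReal_ne_top (measure_ne_top _ _)),
    ENNReal.toReal_mul, ENNReal.toReal_mul, ENNReal.toReal_ofReal ha, ENNReal.toReal_ofReal hb]

lemma egamma_construction (K : Kernel Y Y) [IsMarkovKernel K] (γ : ℝ) (hγ : 1 ≤ γ)
    (δ : ℝ) (hδ : δ ∈ Set.Ioo (0 : ℝ) 1)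
    (y₀ y₁ y₂ : Y) (h01 : y₀ ≠ y₁) (h12 : y₁ ≠ y₂) :
    Egamma γ
        (ENNReal.ofReal (1 - δ) • Measure.dirac y₀ + ENNReal.ofReal δ • Measure.dirac y₁)
        (ENNReal.ofReal ((1 - δ) / γ) • Measure.dirac y₀ +
          ENNReal.ofReal (1 - (1 - δ) / γ) • Measure.dirac y₂) = δ ∧
    Egamma γ
        ((ENNReal.ofReal (1 - δ) • Measure.dirac y₀ +
            ENNReal.ofReal δ • Measure.dirac y₁).bind K)
        ((ENNReal.ofReal ((1 - δ) / γ) • Measure.dirac y₀ +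
            ENNReal.ofReal (1 - (1 - δ) / γ) • Measure.dirac y₂).bind K)
      = δ * Egamma (1 + (γ - 1) / δ) (K y₁) (K y₂) := by
  obtain ⟨hδ0, hδ1⟩ := hδ
  have hγ0 : (0:ℝ) < γ := lt_of_lt_of_le one_pos hγ
  have h1δ : (0:ℝ) ≤ 1 - δ := by linarith
  have hb0 : (0:ℝ) ≤ (1 - δ) / γ := div_nonneg h1δ hγ0.le
  have hb2 : (0:ℝ) ≤ 1 - (1 - δ) / γ := by
    have : (1 - δ) / γ ≤ 1 - δ := div_le_self h1δ hγ
    linarith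
  have hcanc : γ * ((1 - δ) / γ) = 1 - δ := by field_simp
  haveI hμP : IsProbabilityMeasure
      (ENNReal.ofReal (1 - δ) • Measure.dirac y₀ + ENNReal.ofReal δ • Measure.dirac y₁) :=
    isProb_comb h1δ hδ0.le (by ring) y₀ y₁
  constructor
  · apply le_antisymm
    · apply egamma_le_of_forall
      intro A hA
      rw [toReal_comb h1δ hδ0.le, toReal_comb hb0 hb2]
      by_cases h1 : y₁ ∈ A <;> by_cases h2 : y₂ ∈ A <;> by_cases h0 : y₀ ∈ A <;>
        simp [Set.indicator_of_mem, Set.indicator_of_notMem, h0, h1, h2] <;> nlinarith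
    · have h := le_egamma (le_trans zero_le_one hγ)
        (P := ENNReal.ofReal (1 - δ) • Measure.dirac y₀ + ENNReal.ofReal δ • Measure.dirac y₁)
        (Q := ENNReal.ofReal ((1 - δ) / γ) • Measure.dirac y₀ +
          ENNReal.ofReal (1 - (1 - δ) / γ) • Measure.dirac y₂)
        (MeasurableSet.singleton y₁)
      rw [toReal_comb h1δ hδ0.le, toReal_comb hb0 hb2] at h
      rw [Set.indicator_of_notMem (show y₀ ∉ ({y₁} : Set Y) by simp [h01]),
        Set.indicator_of_mem (show y₁ ∈ ({y₁} : Set Y) from rfl),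
        Set.indicator_of_notMem (show y₂ ∉ ({y₁} : Set Y) by simp [Ne.symm h12])] at h
      norm_num at h
      linarith
  · have hpt : ∀ A : {A : Set Y // MeasurableSet A},
        (((ENNReal.ofReal (1 - δ) • Measure.dirac y₀ +
            ENNReal.ofReal δ • Measure.dirac y₁).bind K) A.1).toReal -
          γ * (((ENNReal.ofReal ((1 - δ) / γ) • Measure.dirac y₀ +
            ENNReal.ofReal (1 - (1 - δ) / γ) • Measure.dirac y₂).bind K) A.1).toReal
        = δ * (((K y₁) A.1).toReal - (1 + (γ - 1) / δ) * ((K y₂) A.1).toReal) := by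
      rintro ⟨A, hA⟩
      rw [toReal_bind_comb h1δ hδ0.le K y₀ y₁ hA, toReal_bind_comb hb0 hb2 K y₀ y₂ hA]
      field_simp
      ring
    unfold Egamma
    rw [iSup_congr hpt, ← Real.mul_iSup_of_nonneg hδ0.le]

end Construction

/-- The key construction in the proof of the Dobrushin-type formula for the
contraction coefficient of the `E_γ`-divergence: for distinct `y₀, y₁, y₂` and `δ ∈ (0,1)`, the
measures `μ_δ = (1-δ)·δ_{y₀} + δ·δ_{y₁}` and `ν_δ = ((1-δ)/γ)·δ_{y₀} + (1-(1-δ)/γ)·δ_{y₂}`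
satisfy `E_γ(μ_δ‖ν_δ) = δ` and `E_γ(μ_δ K‖ν_δ K) = δ · E_{γ'}(K(y₁)‖K(y₂))` where
`γ' = 1 + (γ-1)/δ`; consequently the constrained supremum of the contraction ratio dominates
`sup_{y₁ ≠ y₂} E_{γ'}(K(y₁)‖K(y₂))`. -/
theorem Egamma_dirac_construction {Y : Type*} [MeasurableSpace Y]
    [MeasurableSingletonClass Y]
    (K : Kernel Y Y) [IsMarkovKernel K] (γ : ℝ) (hγ : 1 ≤ γ)
    (δ : ℝ) (hδ : δ ∈ Set.Ioo (0 : ℝ) 1)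
    (y₀ y₁ y₂ : Y) (h01 : y₀ ≠ y₁) (h02 : y₀ ≠ y₂) (h12 : y₁ ≠ y₂) :
    Egamma γ
        (ENNReal.ofReal (1 - δ) • Measure.dirac y₀ + ENNReal.ofReal δ • Measure.dirac y₁)
        (ENNReal.ofReal ((1 - δ) / γ) • Measure.dirac y₀ +
          ENNReal.ofReal (1 - (1 - δ) / γ) • Measure.dirac y₂) = δ ∧
    Egamma γ
        ((ENNReal.ofReal (1 - δ) • Measure.dirac y₀ +
            ENNReal.ofReal δ • Measure.dirac y₁).bind K)
        ((ENNReal.ofReal ((1 - δ) / γ) • Measure.dirac y₀ +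
            ENNReal.ofReal (1 - (1 - δ) / γ) • Measure.dirac y₂).bind K)
      = δ * Egamma (1 + (γ - 1) / δ) (K y₁) (K y₂) ∧
    (⨆ q : {yy : Y × Y // yy.1 ≠ yy.2}, Egamma (1 + (γ - 1) / δ) (K q.1.1) (K q.1.2)) ≤
      ⨆ p : {p : Measure Y × Measure Y // IsProbabilityMeasure p.1 ∧ IsProbabilityMeasure p.2 ∧
          0 < Egamma γ p.1 p.2 ∧ Egamma γ p.1 p.2 ≤ δ},
        Egamma γ (p.1.1.bind K) (p.1.2.bind K) / Egamma γ p.1.1 p.1.2 := by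
  obtain ⟨h1, h2⟩ := egamma_construction K γ hγ δ hδ y₀ y₁ y₂ h01 h12
  obtain ⟨hδ0, hδ1⟩ := hδ
  have hγ0 : (0:ℝ) ≤ γ := le_trans zero_le_one hγ
  have hγ0' : (0:ℝ) < γ := lt_of_lt_of_le one_pos hγ
  have h1δ : (0:ℝ) ≤ 1 - δ := by linarith
  have hb0 : (0:ℝ) ≤ (1 - δ) / γ := div_nonneg h1δ hγ0
  have hb2 : (0:ℝ) ≤ 1 - (1 - δ) / γ := by
    have : (1 - δ) / γ ≤ 1 - δ := div_le_self h1δ hγ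
    linarith
  refine ⟨h1, h2, ?_⟩
  haveI : Nonempty {yy : Y × Y // yy.1 ≠ yy.2} := ⟨⟨(y₁, y₂), h12⟩⟩
  -- RHS family is bounded above by 1, via the data processing inequality
  have hbdd : BddAbove (Set.range fun p : {p : Measure Y × Measure Y //
      IsProbabilityMeasure p.1 ∧ IsProbabilityMeasure p.2 ∧
        0 < Egamma γ p.1 p.2 ∧ Egamma γ p.1 p.2 ≤ δ} =>
      Egamma γ (p.1.1.bind K) (p.1.2.bind K) / Egamma γ p.1.1 p.1.2) := by
    refine ⟨1, ?_⟩
    rintro x ⟨⟨⟨μ, ν⟩, hμ, hν, hpos, _⟩, rfl⟩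
    haveI := hμ; haveI := hν
    exact (div_le_one hpos).mpr (egamma_bind_le hγ0 K μ ν)
  refine ciSup_le ?_
  rintro ⟨⟨a, b⟩, hab⟩
  simp only at hab ⊢
  -- choose a third point distinct from a and b
  have hz : ∃ z : Y, z ≠ a ∧ z ≠ b := by
    rcases eq_or_ne y₀ a with rfl | h0a
    · rcases eq_or_ne y₁ b with rfl | h1b
      · exact ⟨y₂, Ne.symm h02, Ne.symm h12⟩
      · exact ⟨y₁, Ne.symm h01, h1b⟩
    · rcases eq_or_ne y₀ b with rfl | h0b
      · rcases eq_or_ne y₁ a with rfl | h1a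
        · exact ⟨y₂, Ne.symm h12, Ne.symm h02⟩
        · exact ⟨y₁, h1a, Ne.symm h01⟩
      · exact ⟨y₀, h0a, h0b⟩
  obtain ⟨z, hza, hzb⟩ := hz
  obtain ⟨he1, he2⟩ := egamma_construction K γ hγ δ ⟨hδ0, hδ1⟩ z a b hza hab
  haveI hμ' : IsProbabilityMeasure
      (ENNReal.ofReal (1 - δ) • Measure.dirac z + ENNReal.ofReal δ • Measure.dirac a) :=
    isProb_comb h1δ hδ0.le (by ring) z a
  haveI hν' : IsProbabilityMeasure
      (ENNReal.ofReal ((1 - δ) / γ) • Measure.dirac z +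
        ENNReal.ofReal (1 - (1 - δ) / γ) • Measure.dirac b) :=
    isProb_comb hb0 hb2 (by ring) z b
  have hmem : IsProbabilityMeasure
        ((ENNReal.ofReal (1 - δ) • Measure.dirac z + ENNReal.ofReal δ • Measure.dirac a,
          ENNReal.ofReal ((1 - δ) / γ) • Measure.dirac z +
            ENNReal.ofReal (1 - (1 - δ) / γ) • Measure.dirac b) :
            Measure Y × Measure Y).1 ∧
      IsProbabilityMeasure
        ((ENNReal.ofReal (1 - δ) • Measure.dirac z + ENNReal.ofReal δ • Measure.dirac a,
          ENNReal.ofReal ((1 - δ) / γ) • Measure.dirac z +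
            ENNReal.ofReal (1 - (1 - δ) / γ) • Measure.dirac b) :
            Measure Y × Measure Y).2 ∧
      0 < Egamma γ (ENNReal.ofReal (1 - δ) • Measure.dirac z + ENNReal.ofReal δ • Measure.dirac a)
          (ENNReal.ofReal ((1 - δ) / γ) • Measure.dirac z +
            ENNReal.ofReal (1 - (1 - δ) / γ) • Measure.dirac b) ∧
      Egamma γ (ENNReal.ofReal (1 - δ) • Measure.dirac z + ENNReal.ofReal δ • Measure.dirac a)
          (ENNReal.ofReal ((1 - δ) / γ) • Measure.dirac z +
            ENNReal.ofReal (1 - (1 - δ) / γ) • Measure.dirac b) ≤ δ := by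
    refine ⟨hμ', hν', ?_, ?_⟩ <;> rw [he1]
    exact hδ0
  have hle := le_ciSup hbdd (⟨_, hmem⟩ : {p : Measure Y × Measure Y //
      IsProbabilityMeasure p.1 ∧ IsProbabilityMeasure p.2 ∧
        0 < Egamma γ p.1 p.2 ∧ Egamma γ p.1 p.2 ≤ δ})
  simp only at hle
  rwa [he1, he2, mul_div_cancel_left₀ _ hδ0.ne'] at hle
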